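/- Let d ≥ 2, r > 0 and f ∈ 𝒜'_d(r). Then the linear operator g ↦ Df·g on 𝒜_d(r), given by the pointwise application of the Jacobian matrix of f, i.e. (Df·g)(θ) = Df(θ)g(θ), is bounded with operator norm at most ‖f‖'_r. -/

import Mathlib

open scoped BigOperators ENNReal Classical
open Complex

noncomputable section

namespace Renorm

/-- ℓ¹ norm of an integer frequency vector. -/
def nZ {d : ℕ} (k : Fin d → ℤ) : ℝ := ∑ i, |(k i : ℝ)|

/-- `ℂ^m` with the ℓ¹ norm. -/
abbrev V (m : ℕ) : Type := PiLp 1 (fun _ : Fin m => ℂ)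

/-- The Banach space underlying `𝒜_d(r)` (and `𝒜'_d(r)`):  an element stores, at
index `k ∈ ℤ^d`, the Fourier coefficient multiplied by the corresponding weight,
so that the `lp`-norm coincides with the norm `‖·‖_r` (resp. `‖·‖'_r`). -/
abbrev AA (d m : ℕ) : Type := lp (fun _ : (Fin d → ℤ) => V m) 1

/-- weight of the norm of `𝒜_d(r)` -/
def w {d : ℕ} (r : ℝ) (k : Fin d → ℤ) : ℝ := Real.exp (r * nZ k)

/-- weight of the norm of `𝒜'_d(r)` -/
def w' {d : ℕ} (r : ℝ) (k : Fin d → ℤ) : ℝ := (1 + 2 * Real.pi * nZ k) * Real.exp (r * nZ k)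

/-- Fourier coefficient of `a` regarded as an element of `𝒜_d(r)`. -/
def coeffA {d m : ℕ} (r : ℝ) (a : AA d m) (k : Fin d → ℤ) : V m := (w r k)⁻¹ • a k

/-- Fourier coefficient of `a` regarded as an element of `𝒜'_d(r)`. -/
def coeffA' {d m : ℕ} (r : ℝ) (a : AA d m) (k : Fin d → ℤ) : V m := (w' r k)⁻¹ • a k

/-- `k · θ` -/
def kdot {d : ℕ} (k : Fin d → ℤ) (θ : V d) : ℂ := ∑ i, (k i : ℂ) * θ i

/-- the Fourier character `e^{2πi k·θ}` -/
def e2 {d : ℕ} (k : Fin d → ℤ) (θ : V d) : ℂ := Complex.exp (2 * Real.pi * Complex.I * kdot k θ)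

/-- the function represented by `a`, regarded as an element of `𝒜_d(r)` -/
def funA {d m : ℕ} (r : ℝ) (a : AA d m) (θ : V d) : V m := ∑' k, e2 k θ • coeffA r a k

/-- the function represented by `a`, regarded as an element of `𝒜'_d(r)` -/
def funA' {d m : ℕ} (r : ℝ) (a : AA d m) (θ : V d) : V m := ∑' k, e2 k θ • coeffA' r a k

/-- the complex domain `D(r)` -/
def Dom (d : ℕ) (r : ℝ) : Set (V d) := {θ | (∑ i, |(θ i).im|) < r / (2 * Real.pi)}

/-- the norm `‖·‖_s` of a family of Fourier coefficients -/
def normA {d m : ℕ} (s : ℝ) (c : (Fin d → ℤ) → V m) : ℝ := ∑' k, ‖c k‖ * w s k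

/-- the norm `‖·‖'_s` of a family of Fourier coefficients -/
def normA' {d m : ℕ} (s : ℝ) (c : (Fin d → ℤ) → V m) : ℝ := ∑' k, ‖c k‖ * w' s k

/-- the set `I_σ⁻(ω)` of far from resonance indices -/
def Iminus {d : ℕ} (σ : ℝ) (ω : V d) : Set (Fin d → ℤ) :=
  {k | σ * nZ k < ‖(∑ i, ω i * (k i : ℂ))‖}

/-- the constant vector field `c` as an element of `𝒜_d(r)` / `𝒜'_d(r)`
(both weights are `1` at `k = 0`). -/
def const {d m : ℕ} (c : V m) : AA d m := lp.single 1 (0 : Fin d → ℤ) c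

/-- the subspace of `𝒜_d` / `𝒜'_d` of vector fields with Fourier modes supported in `S` -/
def SubOn (d m : ℕ) (S : Set (Fin d → ℤ)) : Submodule ℂ (AA d m) where
  carrier := {a | ∀ k ∉ S, a k = 0}
  add_mem' := by
    intro a b ha hb k hk
    rw [lp.coeFn_add, Pi.add_apply, ha k hk, hb k hk, add_zero]
  zero_mem' := by
    intro k _
    rw [lp.coeFn_zero, Pi.zero_apply]
  smul_mem' := by
    intro c a ha k hk
    rw [lp.coeFn_smul, Pi.smul_apply, ha k hk, smul_zero]

/-- real vector as a complex one -/
def toC {d : ℕ} (ω : Fin d → ℝ) : V d := WithLp.toLp 1 (fun i => (ω i : ℂ))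


section Aux
variable {d m : ℕ}

lemma nZ_nonneg (k : Fin d → ℤ) : 0 ≤ nZ k :=
  Finset.sum_nonneg fun i _ => abs_nonneg _

lemma nZ_add_le (k l : Fin d → ℤ) : nZ (k + l) ≤ nZ k + nZ l := by
  rw [nZ, nZ, nZ, ← Finset.sum_add_distrib]
  refine Finset.sum_le_sum fun i _ => ?_
  have h1 : ((k + l) i : ℝ) = (k i : ℝ) + (l i : ℝ) := by
    have : (k + l) i = k i + l i := rfl
    rw [this]; push_cast; ring
  rw [h1]; exact abs_add_le _ _

lemma abs_k_le_nZ (k : Fin d → ℤ) (i : Fin d) : |(k i : ℝ)| ≤ nZ k := by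
  rw [nZ]
  exact Finset.single_le_sum (f := fun j => |(k j : ℝ)|) (fun j _ => abs_nonneg _)
    (Finset.mem_univ i)

lemma w_pos (r : ℝ) (k : Fin d → ℤ) : 0 < w r k := Real.exp_pos _

lemma one_le_w {r : ℝ} (hr : 0 ≤ r) (k : Fin d → ℤ) : 1 ≤ w r k :=
  Real.one_le_exp (mul_nonneg hr (nZ_nonneg k))

lemma w'_pos (r : ℝ) (k : Fin d → ℤ) : 0 < w' r k := by
  have h : (0:ℝ) < 1 + 2 * Real.pi * nZ k := by
    have := mul_nonneg (by positivity : (0:ℝ) ≤ 2 * Real.pi) (nZ_nonneg k)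
    linarith
  exact mul_pos h (Real.exp_pos _)

lemma Vnorm_eq (v : V m) : ‖v‖ = ∑ i, ‖v i‖ := by
  have := PiLp.norm_eq_sum (p := 1) (by norm_num) v
  simpa using this

lemma lp1_summable (a : AA d m) : Summable fun k => ‖a k‖ := by
  have := (lp.memℓp a).summable (by norm_num : 0 < (1 : ℝ≥0∞).toReal)
  simpa using this

lemma lp1_norm (a : AA d m) : ‖a‖ = ∑' k, ‖a k‖ := by
  have := lp.norm_eq_tsum_rpow (p := 1) (by norm_num) a
  simpa using this

end Aux
section Aux2
variable {d m : ℕ}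

lemma kdot_abs_le (k : Fin d → ℤ) (v : V d) : ‖kdot k v‖ ≤ nZ k * ‖v‖ := by
  rw [kdot, Vnorm_eq, Finset.mul_sum]
  refine (norm_sum_le _ _).trans (Finset.sum_le_sum fun i _ => ?_)
  rw [norm_mul]
  have h1 : ‖(k i : ℂ)‖ = |(k i : ℝ)| := by
    rw [show ((k i : ℂ)) = ((k i : ℝ) : ℂ) by push_cast; ring, Complex.norm_real, Real.norm_eq_abs]
  rw [h1]
  exact mul_le_mul_of_nonneg_right (abs_k_le_nZ k i) (norm_nonneg _)

/-- `k·θ` as a continuous linear map. -/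
def kdotCLM (k : Fin d → ℤ) : V d →L[ℂ] ℂ :=
  LinearMap.mkContinuous
    { toFun := fun v => ∑ i, (k i : ℂ) * v i
      map_add' := by
        intro x y
        simp only [PiLp.add_apply, mul_add, Finset.sum_add_distrib]
      map_smul' := by
        intro c x
        simp only [PiLp.smul_apply, smul_eq_mul, RingHom.id_apply, Finset.mul_sum]
        exact Finset.sum_congr rfl fun i _ => by ring }
    (nZ k) (fun v => kdot_abs_le k v)

@[simp] lemma kdotCLM_apply (k : Fin d → ℤ) (v : V d) : kdotCLM k v = kdot k v := rfl

lemma kdotCLM_norm_le (k : Fin d → ℤ) : ‖kdotCLM k‖ ≤ nZ k :=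
  LinearMap.mkContinuous_norm_le _ (nZ_nonneg k) _

lemma kdot_add (k l : Fin d → ℤ) (θ : V d) : kdot (k + l) θ = kdot k θ + kdot l θ := by
  rw [kdot, kdot, kdot, ← Finset.sum_add_distrib]
  refine Finset.sum_congr rfl fun i _ => ?_
  have : (k + l) i = k i + l i := rfl
  rw [this]; push_cast; ring

lemma e2_add (k l : Fin d → ℤ) (θ : V d) : e2 (k + l) θ = e2 k θ * e2 l θ := by
  rw [e2, e2, e2, kdot_add, ← Complex.exp_add]
  ring_nf

lemma kdot_zero (k : Fin d → ℤ) : kdot k (0 : V d) = 0 := by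
  simp [kdot]

lemma e2_zero (k : Fin d → ℤ) : e2 k (0 : V d) = 1 := by
  simp [e2, kdot_zero]

lemma kdot_im (k : Fin d → ℤ) (θ : V d) : (kdot k θ).im = ∑ i, (k i : ℝ) * (θ i).im := by
  rw [kdot, Complex.im_sum]
  refine Finset.sum_congr rfl fun i _ => ?_
  simp [Complex.mul_im]

lemma e2_abs_le {r : ℝ} (hr : 0 < r) (k : Fin d → ℤ) {θ : V d} (hθ : θ ∈ Dom d r) :
    ‖e2 k θ‖ ≤ w r k := by
  rw [e2, Complex.norm_exp, w]
  refine Real.exp_le_exp.2 ?_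
  have hre : (2 * Real.pi * Complex.I * kdot k θ).re = -(2 * Real.pi * (kdot k θ).im) := by
    simp [Complex.mul_re, Complex.mul_im]
  rw [hre]
  have him : |(kdot k θ).im| ≤ nZ k * (∑ i, |(θ i).im|) := by
    rw [kdot_im, Finset.mul_sum]
    refine (Finset.abs_sum_le_sum_abs _ _).trans (Finset.sum_le_sum fun i _ => ?_)
    rw [abs_mul]
    exact mul_le_mul_of_nonneg_right (abs_k_le_nZ k i) (abs_nonneg _)
  have hdom : (∑ i, |(θ i).im|) ≤ r / (2 * Real.pi) := le_of_lt hθ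
  have hπ : (0:ℝ) < 2 * Real.pi := by positivity
  have h2 : -(kdot k θ).im ≤ nZ k * (r / (2 * Real.pi)) :=
    le_trans (neg_le_abs _) (le_trans him
      (mul_le_mul_of_nonneg_left hdom (nZ_nonneg k)))
  calc -(2 * Real.pi * (kdot k θ).im) = 2 * Real.pi * (-(kdot k θ).im) := by ring
    _ ≤ 2 * Real.pi * (nZ k * (r / (2 * Real.pi))) :=
        mul_le_mul_of_nonneg_left h2 (le_of_lt hπ)
    _ = r * nZ k := by field_simp

end Aux2
section Aux3
variable {d : ℕ}

/-- imaginary-part vector, as a real-linear map into ℓ¹(ℝ). -/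
def imVec (d : ℕ) : V d →ₗ[ℝ] PiLp 1 (fun _ : Fin d => ℝ) where
  toFun θ := WithLp.toLp 1 (fun i => (θ i).im)
  map_add' x y := by ext i; simp [PiLp.add_apply]
  map_smul' c x := by ext i; simp [PiLp.smul_apply, Complex.smul_im]

lemma imVec_norm (θ : V d) : ‖imVec d θ‖ = ∑ i, |(θ i).im| := by
  have := PiLp.norm_eq_sum (p := 1) (by norm_num) (imVec d θ)
  simpa [imVec] using this

lemma Dom_eq (r : ℝ) : Dom d r = (imVec d) ⁻¹' Metric.ball 0 (r / (2 * Real.pi)) := by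
  ext θ
  simp [Dom, Metric.mem_ball, dist_zero_right, imVec_norm]

lemma isOpen_Dom (d : ℕ) (r : ℝ) : IsOpen (Dom d r) := by
  rw [Dom_eq]
  exact Metric.isOpen_ball.preimage (imVec d).continuous_of_finiteDimensional

lemma convex_Dom (d : ℕ) (r : ℝ) : Convex ℝ (Dom d r) := by
  rw [Dom_eq]
  exact (convex_ball _ _).linear_preimage (imVec d)

lemma zero_mem_Dom {d : ℕ} {r : ℝ} (hr : 0 < r) : (0 : V d) ∈ Dom d r := by
  have hπ : (0:ℝ) < 2 * Real.pi := by positivity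
  have : ∀ i : Fin d, |((0 : V d) i).im| = 0 := fun i => by simp
  simp only [Dom, Set.mem_setOf_eq]
  rw [Finset.sum_congr rfl fun i _ => this i]
  simp [Finset.sum_const]
  positivity

end Aux3
section Aux4
variable {d m : ℕ}

lemma coeffA'_norm (r : ℝ) (f : AA d m) (k : Fin d → ℤ) :
    ‖coeffA' r f k‖ = (w' r k)⁻¹ * ‖f k‖ := by
  rw [coeffA', norm_smul, Real.norm_eq_abs, abs_of_pos (inv_pos.2 (w'_pos r k))]

lemma coeffA_norm (r : ℝ) (g : AA d m) (k : Fin d → ℤ) :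
    ‖coeffA r g k‖ = (w r k)⁻¹ * ‖g k‖ := by
  rw [coeffA, norm_smul, Real.norm_eq_abs, abs_of_pos (inv_pos.2 (w_pos r k))]

lemma abs_two_pi_I : ‖(2 * Real.pi * Complex.I : ℂ)‖ = 2 * Real.pi := by
  simp [abs_of_pos Real.pi_pos]

/-- derivative of a single Fourier term of `funA' r f` -/
def Dterm (r : ℝ) (f : AA d d) (k : Fin d → ℤ) (θ : V d) : V d →L[ℂ] V d :=
  (Complex.exp (2 * Real.pi * Complex.I * kdot k θ) •
    ((2 * Real.pi * Complex.I : ℂ) • kdotCLM k)).smulRight (coeffA' r f k)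

lemma hasFDerivAt_term (r : ℝ) (f : AA d d) (k : Fin d → ℤ) (θ : V d) :
    HasFDerivAt (fun θ => e2 k θ • coeffA' r f k) (Dterm r f k θ) θ := by
  have h1 : HasFDerivAt (fun θ : V d => (2 * Real.pi * Complex.I : ℂ) * kdotCLM k θ)
      ((2 * Real.pi * Complex.I : ℂ) • kdotCLM k) θ :=
    (kdotCLM k).hasFDerivAt.const_mul _
  have h3 := h1.cexp.smul_const (coeffA' r f k)
  exact h3

lemma Dterm_apply (r : ℝ) (f : AA d d) (k : Fin d → ℤ) (θ v : V d) :
    Dterm r f k θ v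
      = (e2 k θ * ((2 * Real.pi * Complex.I) * kdot k v)) • coeffA' r f k := by
  simp only [Dterm, e2, ContinuousLinearMap.smulRight_apply,
    ContinuousLinearMap.smul_apply, kdotCLM_apply, smul_eq_mul, smul_smul, mul_assoc]

lemma Dterm_norm_le {r : ℝ} (hr : 0 < r) (f : AA d d) (k : Fin d → ℤ) {θ : V d}
    (hθ : θ ∈ Dom d r) : ‖Dterm r f k θ‖ ≤ ‖f k‖ := by
  rw [Dterm]
  rw [ContinuousLinearMap.norm_smulRight_apply, norm_smul, norm_smul, coeffA'_norm]
  have h1 : ‖Complex.exp (2 * Real.pi * Complex.I * kdot k θ)‖ ≤ w r k :=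
    e2_abs_le hr k hθ
  have h2 : ‖(2 * Real.pi * Complex.I : ℂ)‖ = 2 * Real.pi := abs_two_pi_I
  have h3 : ‖kdotCLM (d := d) k‖ ≤ nZ k := kdotCLM_norm_le k
  have hkey : w r k * (2 * Real.pi * nZ k) ≤ w' r k := by
    rw [w, w']
    have : 2 * Real.pi * nZ k ≤ 1 + 2 * Real.pi * nZ k := by linarith
    nlinarith [Real.exp_pos (r * nZ k)]
  have hn1 : (0:ℝ) ≤ ‖Complex.exp (2 * Real.pi * Complex.I * kdot k θ)‖ := norm_nonneg _
  have hstep : ‖Complex.exp (2 * Real.pi * Complex.I * kdot k θ)‖ *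
      (‖(2 * Real.pi * Complex.I : ℂ)‖ * ‖kdotCLM (d := d) k‖) ≤ w' r k := by
    rw [h2]
    calc ‖Complex.exp (2 * Real.pi * Complex.I * kdot k θ)‖ * (2 * Real.pi * ‖kdotCLM (d := d) k‖)
        ≤ w r k * (2 * Real.pi * nZ k) := by
          apply mul_le_mul h1 _ _ (le_of_lt (w_pos r k))
          · exact mul_le_mul_of_nonneg_left h3 (by positivity)
          · positivity
      _ ≤ w' r k := hkey
  calc ‖Complex.exp (2 * Real.pi * Complex.I * kdot k θ)‖ *
        (‖(2 * Real.pi * Complex.I : ℂ)‖ * ‖kdotCLM (d := d) k‖) * ((w' r k)⁻¹ * ‖f k‖)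
      ≤ w' r k * ((w' r k)⁻¹ * ‖f k‖) := by
        apply mul_le_mul_of_nonneg_right hstep
        have := inv_pos.2 (w'_pos (d := d) r k)
        positivity
    _ = ‖f k‖ := by
        rw [← mul_assoc, mul_inv_cancel₀ (ne_of_gt (w'_pos r k)), one_mul]

end Aux4
section Aux5
variable {d : ℕ}

lemma one_le_w' {r : ℝ} (hr : 0 ≤ r) (k : Fin d → ℤ) : 1 ≤ w' r k := by
  rw [w']
  have h1 : (1:ℝ) ≤ 1 + 2 * Real.pi * nZ k := by
    have := mul_nonneg (by positivity : (0:ℝ) ≤ 2 * Real.pi) (nZ_nonneg k)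
    linarith
  have h2 : (1:ℝ) ≤ Real.exp (r * nZ k) := Real.one_le_exp (mul_nonneg hr (nZ_nonneg k))
  nlinarith

lemma wkey (r : ℝ) (k : Fin d → ℤ) : w r k * (2 * Real.pi * nZ k) ≤ w' r k := by
  rw [w, w']
  nlinarith [Real.exp_pos (r * nZ k)]

lemma w_mul (r : ℝ) {k l : Fin d → ℤ} (hr : 0 ≤ r) : w r (k + l) ≤ w r k * w r l := by
  rw [w, w, w, ← Real.exp_add]
  refine Real.exp_le_exp.2 ?_
  have := mul_le_mul_of_nonneg_left (nZ_add_le k l) hr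
  linarith

/-- pair convolution term -/
def Tpair (r : ℝ) (f g : AA d d) (p : (Fin d → ℤ) × (Fin d → ℤ)) : V d :=
  ((2 * Real.pi * Complex.I) * kdot p.1 (coeffA r g p.2)) • coeffA' r f p.1

lemma Tpair_bound {r : ℝ} (hr : 0 < r) (f g : AA d d) (p : (Fin d → ℤ) × (Fin d → ℤ)) :
    ‖Tpair r f g p‖ * w r (p.1 + p.2) ≤ ‖f p.1‖ * ‖g p.2‖ := by
  obtain ⟨k, l⟩ := p
  set A := ‖coeffA' r f k‖ with hA
  set B := ‖coeffA r g l‖ with hB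
  have hA0 : 0 ≤ A := norm_nonneg _
  have hB0 : 0 ≤ B := norm_nonneg _
  have ha : ‖f k‖ = w' r k * A := by
    rw [hA, coeffA'_norm, ← mul_assoc, mul_inv_cancel₀ (ne_of_gt (w'_pos r k)), one_mul]
  have hb : ‖g l‖ = w r l * B := by
    rw [hB, coeffA_norm, ← mul_assoc, mul_inv_cancel₀ (ne_of_gt (w_pos r l)), one_mul]
  have hT : ‖Tpair r f g (k, l)‖ ≤ 2 * Real.pi * nZ k * B * A := by
    rw [Tpair, norm_smul, ← hA]
    refine mul_le_mul_of_nonneg_right ?_ hA0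
    rw [norm_mul]
    calc ‖(2 * Real.pi * Complex.I : ℂ)‖ * ‖kdot k (coeffA r g l)‖
        = 2 * Real.pi * ‖kdot k (coeffA r g l)‖ := by
          rw [show ‖(2 * Real.pi * Complex.I : ℂ)‖ = 2 * Real.pi from abs_two_pi_I]
      _ ≤ 2 * Real.pi * (nZ k * B) := by
          refine mul_le_mul_of_nonneg_left ?_ (by positivity)
          rw [hB]; exact kdot_abs_le k _
      _ = 2 * Real.pi * nZ k * B := by ring
  calc ‖Tpair r f g (k, l)‖ * w r (k + l)
      ≤ (2 * Real.pi * nZ k * B * A) * (w r k * w r l) := by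
        exact mul_le_mul hT (w_mul r hr.le) (w_pos r _).le
          (mul_nonneg (mul_nonneg (mul_nonneg (by positivity) (nZ_nonneg k)) hB0) hA0)
    _ = (w r k * (2 * Real.pi * nZ k)) * (A * (w r l * B)) := by ring
    _ ≤ w' r k * (A * (w r l * B)) := by
        exact mul_le_mul_of_nonneg_right (wkey r k)
          (mul_nonneg hA0 (mul_nonneg (w_pos r l).le hB0))
    _ = ‖f k‖ * ‖g l‖ := by rw [ha, hb]; ring

/-- reindexing equivalence `(k, l) ↦ (k + l, k)` -/
def φp (d : ℕ) : ((Fin d → ℤ) × (Fin d → ℤ)) ≃ ((Fin d → ℤ) × (Fin d → ℤ)) where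
  toFun p := (p.1 + p.2, p.1)
  invFun q := (q.2, q.1 - q.2)
  left_inv p := by ext <;> simp
  right_inv q := by ext <;> simp

end Aux5
set_option maxHeartbeats 2000000 in
/-- for `f ∈ 𝒜'_d(r)`, the operator `g ↦ Df·g` on `𝒜_d(r)` is
bounded with operator norm at most `‖f‖'_r`. -/
theorem statement14 {d : ℕ} (hd : 2 ≤ d) (r : ℝ) (hr : 0 < r) (f : AA d d) :
    ∀ g : AA d d, ∃ h : AA d d,
      Set.EqOn (funA r h) (fun θ => fderiv ℂ (funA' r f) θ (funA r g θ)) (Dom d r) ∧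
      ‖h‖ ≤ ‖f‖ * ‖g‖ := by
  intro g
  have Sf : Summable fun k => ‖f k‖ := lp1_summable f
  have Sg : Summable fun k => ‖g k‖ := lp1_summable g
  have Sfg : Summable fun p : (Fin d → ℤ) × (Fin d → ℤ) => ‖f p.1‖ * ‖g p.2‖ :=
    Sf.mul_of_nonneg Sg (fun _ => norm_nonneg _) (fun _ => norm_nonneg _)
  have ST : Summable fun p : (Fin d → ℤ) × (Fin d → ℤ) =>
      ‖Tpair r f g p‖ * w r (p.1 + p.2) :=
    Summable.of_nonneg_of_le (fun p => mul_nonneg (norm_nonneg _) (w_pos r _).le)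
      (fun p => Tpair_bound hr f g p) Sfg
  have SQ : Summable fun q : (Fin d → ℤ) × (Fin d → ℤ) =>
      ‖Tpair r f g (q.2, q.1 - q.2)‖ * w r q.1 := by
    refine ((φp d).summable_iff).mp ?_
    have hcomp : (fun q : (Fin d → ℤ) × (Fin d → ℤ) =>
        ‖Tpair r f g (q.2, q.1 - q.2)‖ * w r q.1) ∘ (φp d)
        = fun p => ‖Tpair r f g p‖ * w r (p.1 + p.2) := by
      funext p
      simp [φp, Function.comp]
    rw [hcomp]
    exact ST
  have SinnerW : ∀ mm, Summable fun k => ‖Tpair r f g (k, mm - k)‖ * w r mm :=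
    fun mm => SQ.prod_factor mm
  have SinnerN : ∀ mm, Summable fun k => ‖Tpair r f g (k, mm - k)‖ := by
    intro mm
    have h1 := (SinnerW mm).mul_right (w r mm)⁻¹
    have h2 : (fun k => ‖Tpair r f g (k, mm - k)‖ * w r mm * (w r mm)⁻¹)
        = fun k => ‖Tpair r f g (k, mm - k)‖ := by
      funext k
      rw [mul_assoc, mul_inv_cancel₀ (ne_of_gt (w_pos r mm)), mul_one]
    rwa [h2] at h1
  have SinnerT : ∀ mm, Summable fun k => Tpair r f g (k, mm - k) :=
    fun mm => (SinnerN mm).of_norm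
  set hfun : (Fin d → ℤ) → V d :=
    fun mm => w r mm • ∑' k, Tpair r f g (k, mm - k) with hfun_def
  have hnormle : ∀ mm, ‖hfun mm‖ ≤ ∑' k, ‖Tpair r f g (k, mm - k)‖ * w r mm := by
    intro mm
    calc ‖hfun mm‖ = w r mm * ‖∑' k, Tpair r f g (k, mm - k)‖ := by
          rw [hfun_def, norm_smul, Real.norm_eq_abs, abs_of_pos (w_pos r mm)]
      _ ≤ w r mm * ∑' k, ‖Tpair r f g (k, mm - k)‖ :=
          mul_le_mul_of_nonneg_left (norm_tsum_le_tsum_norm (SinnerN mm)) (w_pos r mm).le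
      _ = ∑' k, ‖Tpair r f g (k, mm - k)‖ * w r mm := by
          rw [tsum_mul_right, mul_comm]
  have SumNorm : Summable fun mm => ‖hfun mm‖ :=
    Summable.of_nonneg_of_le (fun _ => norm_nonneg _) hnormle SQ.prod
  have Smem : Memℓp hfun 1 := memℓp_gen (by simpa using SumNorm)
  refine ⟨⟨hfun, Smem⟩, ?_, ?_⟩
  · intro θ hθ
    have SG : Summable fun l => e2 l θ • coeffA r g l := by
      refine Summable.of_norm_bounded Sg ?_
      intro l
      rw [norm_smul, coeffA_norm]
      have h0 : (0:ℝ) ≤ (w r l)⁻¹ * ‖g l‖ :=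
        mul_nonneg (inv_pos.2 (w_pos r l)).le (norm_nonneg _)
      calc ‖e2 l θ‖ * ((w r l)⁻¹ * ‖g l‖) ≤ w r l * ((w r l)⁻¹ * ‖g l‖) := by
            refine mul_le_mul_of_nonneg_right ?_ h0
            exact e2_abs_le hr l hθ
        _ = ‖g l‖ := by rw [← mul_assoc, mul_inv_cancel₀ (ne_of_gt (w_pos r l)), one_mul]
    have SD : Summable fun k => Dterm r f k θ :=
      Summable.of_norm_bounded Sf (fun k => Dterm_norm_le hr f k hθ)
    have S0 : Summable fun k => e2 k (0 : V d) • coeffA' r f k := by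
      simp_rw [e2_zero, one_smul]
      refine Summable.of_norm_bounded Sf ?_
      intro k
      rw [coeffA'_norm]
      calc (w' r k)⁻¹ * ‖f k‖ ≤ 1 * ‖f k‖ :=
            mul_le_mul_of_nonneg_right (inv_le_one_of_one_le₀ (one_le_w' hr.le k))
              (norm_nonneg _)
        _ = ‖f k‖ := one_mul _
    have hD : HasFDerivAt (funA' r f) (∑' k, Dterm r f k θ) θ := by
      have h := hasFDerivAt_tsum_of_isPreconnected Sf (isOpen_Dom d r)
        (convex_Dom d r).isPreconnected
        (fun k x _ => hasFDerivAt_term r f k x)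
        (fun k x hx => Dterm_norm_le hr f k hx)
        (zero_mem_Dom hr) S0 hθ
      exact h
    have hfd : fderiv ℂ (funA' r f) θ = ∑' k, Dterm r f k θ := hD.fderiv
    have hkdotG : ∀ k, kdot k (funA r g θ) = ∑' l, e2 l θ * kdot k (coeffA r g l) := by
      intro k
      calc kdot k (funA r g θ) = kdotCLM k (∑' l, e2 l θ • coeffA r g l) := rfl
        _ = ∑' l, kdotCLM k (e2 l θ • coeffA r g l) := (kdotCLM k).map_tsum SG
        _ = ∑' l, e2 l θ * kdot k (coeffA r g l) := by
            refine tsum_congr fun l => ?_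
            rw [map_smul, kdotCLM_apply, smul_eq_mul]
    have hSy : ∀ k, Summable fun l => e2 l θ * kdot k (coeffA r g l) := by
      intro k
      have h := SG.map (kdotCLM k).toLinearMap.toAddMonoidHom (kdotCLM k).continuous
      refine h.congr fun l => ?_
      show kdotCLM k (e2 l θ • coeffA r g l) = _
      rw [map_smul, kdotCLM_apply, smul_eq_mul]
    have hterm : ∀ k, Dterm r f k θ (funA r g θ)
        = ∑' l, e2 (k + l) θ • Tpair r f g (k, l) := by
      intro k
      rw [Dterm_apply, hkdotG k]
      have hs1 : Summable fun l =>
          (2 * Real.pi * Complex.I : ℂ) * (e2 l θ * kdot k (coeffA r g l)) :=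
        (hSy k).mul_left _
      have hs2 : Summable fun l =>
          e2 k θ * ((2 * Real.pi * Complex.I : ℂ) * (e2 l θ * kdot k (coeffA r g l))) :=
        hs1.mul_left _
      rw [← tsum_mul_left (a := (2 * Real.pi * Complex.I : ℂ))]
      rw [← tsum_mul_left (a := e2 k θ)]
      rw [← Summable.tsum_smul_const hs2 (coeffA' r f k)]
      refine tsum_congr fun l => ?_
      rw [e2_add, Tpair, smul_smul]
      congr 1
      ring
    set E : (Fin d → ℤ) × (Fin d → ℤ) → V d :=
      fun p => e2 (p.1 + p.2) θ • Tpair r f g p with hE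
    have SEn : Summable fun p => ‖E p‖ := by
      refine Summable.of_nonneg_of_le (fun _ => norm_nonneg _) ?_ ST
      intro p
      rw [hE, norm_smul, mul_comm]
      refine mul_le_mul_of_nonneg_left ?_ (norm_nonneg _)
      exact e2_abs_le hr _ hθ
    have SE : Summable E := SEn.of_norm
    have lhs2 : fderiv ℂ (funA' r f) θ (funA r g θ) = ∑' p, E p := by
      rw [hfd]
      have h1 := (ContinuousLinearMap.apply ℂ (V d) (funA r g θ)).map_tsum SD
      simp only [ContinuousLinearMap.apply_apply] at h1
      rw [h1]
      calc ∑' k, Dterm r f k θ (funA r g θ)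
          = ∑' k, ∑' l, E (k, l) := tsum_congr fun k => hterm k
        _ = ∑' p, E p := (Summable.tsum_prod' SE (fun k => SE.prod_factor k)).symm
    have hcoeffh : ∀ mm, coeffA r (⟨hfun, Smem⟩ : AA d d) mm
        = ∑' k, Tpair r f g (k, mm - k) := by
      intro mm
      show (w r mm)⁻¹ • hfun mm = _
      rw [hfun_def]
      exact inv_smul_smul₀ (ne_of_gt (w_pos r mm)) _
    have rhs1 : funA r (⟨hfun, Smem⟩ : AA d d) θ
        = ∑' mm, ∑' k, e2 mm θ • Tpair r f g (k, mm - k) := by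
      rw [funA]
      refine tsum_congr fun mm => ?_
      rw [hcoeffh mm, ← Summable.tsum_const_smul (e2 mm θ) (SinnerT mm)]
    set E' : (Fin d → ℤ) × (Fin d → ℤ) → V d :=
      fun q => e2 q.1 θ • Tpair r f g (q.2, q.1 - q.2) with hE'
    have hcompE : E' ∘ (φp d) = E := by
      funext p
      simp only [hE', hE, φp, Function.comp, Equiv.coe_fn_mk]
      rw [add_sub_cancel_left]
    have SE' : Summable E' := ((φp d).summable_iff).mp (by rw [hcompE]; exact SE)
    have rhs2 : funA r (⟨hfun, Smem⟩ : AA d d) θ = ∑' p, E p := by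
      rw [rhs1, ← Summable.tsum_prod' SE' (fun mm => SE'.prod_factor mm), ← (φp d).tsum_eq E']
      exact tsum_congr fun p => congrFun hcompE p
    show funA r (⟨hfun, Smem⟩ : AA d d) θ = fderiv ℂ (funA' r f) θ (funA r g θ)
    rw [rhs2, lhs2]
  · rw [lp1_norm]
    have hcoe : ∀ mm, (⟨hfun, Smem⟩ : AA d d) mm = hfun mm := fun _ => rfl
    calc (∑' mm, ‖(⟨hfun, Smem⟩ : AA d d) mm‖)
        = ∑' mm, ‖hfun mm‖ := by exact tsum_congr fun mm => by rw [hcoe]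
      _ ≤ ∑' mm, ∑' k, ‖Tpair r f g (k, mm - k)‖ * w r mm :=
          Summable.tsum_le_tsum hnormle SumNorm SQ.prod
      _ = ∑' q : (Fin d → ℤ) × (Fin d → ℤ), ‖Tpair r f g (q.2, q.1 - q.2)‖ * w r q.1 :=
          (Summable.tsum_prod' SQ (fun mm => SQ.prod_factor mm)).symm
      _ = ∑' p : (Fin d → ℤ) × (Fin d → ℤ), ‖Tpair r f g p‖ * w r (p.1 + p.2) := by
          rw [← (φp d).tsum_eq]
          exact tsum_congr fun p => by simp [φp]
      _ ≤ ∑' p : (Fin d → ℤ) × (Fin d → ℤ), ‖f p.1‖ * ‖g p.2‖ :=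
          Summable.tsum_le_tsum (fun p => Tpair_bound hr f g p) ST Sfg
      _ = (∑' k, ‖f k‖) * (∑' l, ‖g l‖) := by
          rw [Summable.tsum_prod' Sfg (fun k => Sfg.prod_factor k)]
          simp_rw [tsum_mul_left]
          rw [tsum_mul_right]
      _ = ‖f‖ * ‖g‖ := by rw [lp1_norm f, lp1_norm g]
end Renorm
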